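/- For every pair k, j ∈ {1,…,n} with k ≥ j, the polynomial b_{k,j} ∈ ℚ[u_1,…,u_n,t] is symmetric in the variables u_1,…,u_j: for every permutation σ of {1,…,j}, the ℚ-algebra automorphism of ℚ[u_1,…,u_n,t] sending u_r ↦ u_{σ(r)} for r ≤ j and fixing u_r for r > j and fixing t, maps b_{k,j} to itself. -/

import Mathlib

/-- The variable `u_k` (for `1 ≤ k ≤ n`) in `ℚ[u_1,…,u_n,t]`, realized as
`MvPolynomial (Fin (n+1)) ℚ` where the variable of index `0` is `t` and the variable
of index `k` (for `1 ≤ k ≤ n`) is `u_k`. -/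
noncomputable def uv (n k : ℕ) : MvPolynomial (Fin (n + 1)) ℚ :=
  if h : k ≤ n then MvPolynomial.X ⟨k, Nat.lt_succ_of_le h⟩ else 0

/-- The variable `t` in `ℚ[u_1,…,u_n,t]`. -/
noncomputable def tv (n : ℕ) : MvPolynomial (Fin (n + 1)) ℚ :=
  MvPolynomial.X 0

/-- `b_{j,j} := Σ_{k=1}^{j} (u_k − (k−1)·t)`. -/
noncomputable def bbase (n j : ℕ) : MvPolynomial (Fin (n + 1)) ℚ :=
  ∑ r ∈ Finset.Icc 1 j, (uv n r - ((r : MvPolynomial (Fin (n + 1)) ℚ) - 1) * tv n)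

/-- The polynomials `b_{k,j}`: `b_{j,j} = Σ_{r=1}^{j}(u_r − (r−1)t)`, `b_{k,0} = 0`,
and `b_{k+1,j} = b_{k,j−1} + u_j·b_{k,j} − (u_j + t)·b_{k−1,j−1}` for `k ≥ j`. -/
noncomputable def bb (n : ℕ) : ℕ → ℕ → MvPolynomial (Fin (n + 1)) ℚ
  | _, 0 => 0
  | 0, _ + 1 => 0
  | 1, j + 1 => if 1 = j + 1 then bbase n (j + 1) else 0
  | k + 2, j + 1 =>
    if k + 2 = j + 1 then bbase n (j + 1)
    else if k + 2 < j + 1 then 0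
    else bb n (k + 1) j + uv n (j + 1) * bb n (k + 1) (j + 1)
      - (uv n (j + 1) + tv n) * bb n k j

section StepAux

variable {R : Type*} [CommRing R]

/-- Adding one variable `v` at level `j` to the triangular family. -/
def step (j : ℕ) (v t : R) (a : ℕ → R) : ℕ → R
  | 0 => 0
  | k + 1 =>
    if k + 1 < j then 0
    else if k + 1 = j then a k + v - (k : R) * t
    else a k + v * step j v t a k - (v + t) * a (k - 1)

lemma step_zero (j : ℕ) (v t : R) (a : ℕ → R) : step j v t a 0 = 0 := rfl

lemma step_of_lt {j k : ℕ} (h : k < j) (v t : R) (a : ℕ → R) : step j v t a k = 0 := by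
  cases k with
  | zero => rfl
  | succ k => simp [step, h]

lemma step_diag (m : ℕ) (v t : R) (a : ℕ → R) :
    step (m + 1) v t a (m + 1) = a m + v - (m : R) * t := by
  simp [step]

lemma step_succ {j k : ℕ} (h : j ≤ k + 1) (v t : R) (a : ℕ → R) :
    step j v t a (k + 2) = a (k + 1) + v * step j v t a (k + 1) - (v + t) * a k := by
  have h1 : ¬ (k + 1 + 1 < j) := by omega
  have h2 : ¬ (k + 1 + 1 = j) := by omega
  show step j v t a (k + 1 + 1) = _
  rw [step, if_neg h1, if_neg h2]
  simp

lemma step_star {m l : ℕ} (h : m ≤ l) (v w t : R) (a : ℕ → R) :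
    step (m + 2) w t (step (m + 1) v t a) (l + 4) =
      (v + w) * step (m + 2) w t (step (m + 1) v t a) (l + 3)
      - v * w * step (m + 2) w t (step (m + 1) v t a) (l + 2)
      + a (l + 2) - (v + w + 2 * t) * a (l + 1) + (w + t) * (v + t) * a l := by
  set A : ℕ → R := step (m + 1) v t a with hA
  set S : ℕ → R := step (m + 2) w t A with hS
  have hS4 : S (l + 4) = A (l + 3) + w * S (l + 3) - (w + t) * A (l + 2) := by
    have e : l + 4 = (l + 2) + 2 := by omega
    rw [hS, e, step_succ (by omega)]
  have hS3 : S (l + 3) = A (l + 2) + w * S (l + 2) - (w + t) * A (l + 1) := by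
    have e : l + 3 = (l + 1) + 2 := by omega
    rw [hS, e, step_succ (by omega)]
  have hA3 : A (l + 3) = a (l + 2) + v * A (l + 2) - (v + t) * a (l + 1) := by
    have e : l + 3 = (l + 1) + 2 := by omega
    rw [hA, e, step_succ (by omega)]
  have hA2 : A (l + 2) = a (l + 1) + v * A (l + 1) - (v + t) * a l := by
    rw [hA, step_succ (by omega)]
  rw [hS4, hS3, hA3, hA2]
  ring

/-- Adding two variables at consecutive levels commutes. -/
lemma step_comm (m : ℕ) (v w t : R) (a : ℕ → R) :
    step (m + 2) w t (step (m + 1) v t a) = step (m + 2) v t (step (m + 1) w t a) := by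
  set S : ℕ → R := step (m + 2) w t (step (m + 1) v t a) with hS
  set T : ℕ → R := step (m + 2) v t (step (m + 1) w t a) with hT
  have key : ∀ k, S k = T k ∧ S (k + 1) = T (k + 1) := by
    intro k
    induction k with
    | zero =>
      constructor
      · rw [hS, hT, step_of_lt (by omega), step_of_lt (by omega)]
      · rw [hS, hT, step_of_lt (by omega), step_of_lt (by omega)]
    | succ k ih =>
      refine ⟨ih.2, ?_⟩
      rcases Nat.lt_or_ge (k + 1 + 1) (m + 2) with h | h
      · rw [hS, hT, step_of_lt h, step_of_lt h]
      rcases Nat.lt_or_ge k (m + 2) with h' | h'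
      · rcases Nat.lt_or_ge k (m + 1) with h'' | h''
        · -- k = m
          have e : k + 1 + 1 = (m + 1) + 1 := by omega
          rw [hS, hT, e]
          have d1 : step (m + 2) w t (step (m + 1) v t a) ((m + 1) + 1)
              = step (m + 1) v t a (m + 1) + w - ((m + 1 : ℕ) : R) * t :=
            step_diag (m + 1) w t _
          have d2 : step (m + 2) v t (step (m + 1) w t a) ((m + 1) + 1)
              = step (m + 1) w t a (m + 1) + v - ((m + 1 : ℕ) : R) * t :=
            step_diag (m + 1) v t _
          rw [d1, d2, step_diag m v t a, step_diag m w t a]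
          push_cast
          ring
        · -- k = m + 1
          have e : k + 1 + 1 = (m + 1) + 2 := by omega
          rw [hS, hT, e]
          have s1 : step (m + 2) w t (step (m + 1) v t a) ((m + 1) + 2)
              = step (m + 1) v t a (m + 1 + 1)
                + w * step (m + 2) w t (step (m + 1) v t a) (m + 1 + 1)
                - (w + t) * step (m + 1) v t a (m + 1) :=
            step_succ (by omega) w t _
          have s2 : step (m + 2) v t (step (m + 1) w t a) ((m + 1) + 2)
              = step (m + 1) w t a (m + 1 + 1)
                + v * step (m + 2) v t (step (m + 1) w t a) (m + 1 + 1)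
                - (v + t) * step (m + 1) w t a (m + 1) :=
            step_succ (by omega) v t _
          have a1 : step (m + 1) v t a (m + 1 + 1)
              = a (m + 1) + v * step (m + 1) v t a (m + 1) - (v + t) * a m :=
            step_succ (by omega) v t a
          have a2 : step (m + 1) w t a (m + 1 + 1)
              = a (m + 1) + w * step (m + 1) w t a (m + 1) - (w + t) * a m :=
            step_succ (by omega) w t a
          have d1 : step (m + 2) w t (step (m + 1) v t a) (m + 1 + 1)
              = step (m + 1) v t a (m + 1) + w - ((m + 1 : ℕ) : R) * t :=
            step_diag (m + 1) w t _
          have d2 : step (m + 2) v t (step (m + 1) w t a) (m + 1 + 1)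
              = step (m + 1) w t a (m + 1) + v - ((m + 1 : ℕ) : R) * t :=
            step_diag (m + 1) v t _
          rw [s1, s2, a1, a2, d1, d2, step_diag m v t a, step_diag m w t a]
          push_cast
          ring
      · -- k ≥ m + 2 : use step_star
        obtain ⟨i, rfl⟩ : ∃ i, k = (m + i) + 2 := ⟨k - m - 2, by omega⟩
        obtain ⟨ihk, ihk1⟩ := ih
        have e : m + i + 2 + 1 + 1 = (m + i) + 4 := by omega
        have e1 : m + i + 2 + 1 = (m + i) + 3 := by omega
        rw [e]
        rw [e1] at ihk1
        rw [hS, hT] at ihk1 ihk ⊢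
        rw [step_star (by omega), step_star (by omega), ihk1, ihk]
        ring
  funext k
  exact (key k).1

/-- Iterating `step` over a list of variables. -/
def build (t : R) : List R → ℕ → R
  | [] => fun _ => 0
  | v :: l => step (l.length + 1) v t (build t l)

lemma build_perm (t : R) {l₁ l₂ : List R} (h : l₁.Perm l₂) : build t l₁ = build t l₂ := by
  induction h with
  | nil => rfl
  | cons x h ih => simp only [build, h.length_eq, ih]
  | swap x y l => exact step_comm l.length x y t (build t l)
  | trans h₁ h₂ ih₁ ih₂ => rw [ih₁, ih₂]

lemma map_step {S : Type*} [CommRing S] {F : Type*} [FunLike F R S] [RingHomClass F R S]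
    (f : F) (j : ℕ) (v t : R) (a : ℕ → R) : ∀ k,
    f (step j v t a k) = step j (f v) (f t) (fun m => f (a m)) k := by
  intro k
  induction k with
  | zero => simp [step]
  | succ k ih =>
    by_cases h1 : k + 1 < j
    · rw [step_of_lt h1, step_of_lt h1, map_zero]
    · by_cases h2 : k + 1 = j
      · show f (step j v t a (k + 1)) = step j (f v) (f t) (fun m => f (a m)) (k + 1)
        rw [step, step, if_neg h1, if_neg h1, if_pos h2, if_pos h2]
        push_cast
        rw [map_sub, map_add, map_mul, map_natCast]
      · show f (step j v t a (k + 1)) = step j (f v) (f t) (fun m => f (a m)) (k + 1)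
        rw [step, step, if_neg h1, if_neg h1, if_neg h2, if_neg h2]
        rw [map_sub, map_add, map_mul, map_mul, map_add, ih]

lemma map_build {S : Type*} [CommRing S] {F : Type*} [FunLike F R S] [RingHomClass F R S]
    (f : F) (t : R) : ∀ (l : List R) (k : ℕ),
    f (build t l k) = build (f t) (l.map f) k := by
  intro l
  induction l with
  | nil => intro k; simp [build]
  | cons v l ih =>
    intro k
    simp only [build, List.map_cons, List.length_map]
    rw [map_step]
    have h : (fun m => f (build t l m)) = build (f t) (l.map f) := funext ih
    rw [h]

end StepAux

/-- The list `[j, j-1, …, 1]`. -/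
def Lnat : ℕ → List ℕ
  | 0 => []
  | j + 1 => (j + 1) :: Lnat j

lemma Lnat_length (j : ℕ) : (Lnat j).length = j := by
  induction j with
  | zero => rfl
  | succ j ih => simp [Lnat, ih]

lemma mem_Lnat {x : ℕ} : ∀ {j : ℕ}, x ∈ Lnat j ↔ 1 ≤ x ∧ x ≤ j := by
  intro j
  induction j with
  | zero => simp [Lnat]; omega
  | succ j ih => simp [Lnat, ih]; omega

lemma Lnat_nodup (j : ℕ) : (Lnat j).Nodup := by
  induction j with
  | zero => simp [Lnat]
  | succ j ih =>
    simp only [Lnat, List.nodup_cons]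
    exact ⟨fun h => by have := mem_Lnat.1 h; omega, ih⟩

lemma Lnat_toFinset (j : ℕ) : (Lnat j).toFinset = Finset.Icc 1 j := by
  ext x
  simp [List.mem_toFinset, mem_Lnat, Finset.mem_Icc]

lemma bb_of_lt (n : ℕ) : ∀ {k j : ℕ}, k < j → bb n k j = 0 := by
  intro k j h
  match k, j with
  | 0, j + 1 => rw [bb]
  | 1, j + 1 => rw [bb, if_neg (by omega)]
  | k + 2, j + 1 => rw [bb, if_neg (by omega), if_pos (by omega)]

lemma bb_diag (n : ℕ) : ∀ j, bb n j j = bbase n j := by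
  intro j
  match j with
  | 0 => rw [bb]; simp [bbase]
  | 1 => rw [bb, if_pos rfl]
  | j + 2 => rw [bb, if_pos rfl]

lemma bbase_succ (n j : ℕ) :
    bbase n (j + 1) = bbase n j + (uv n (j + 1) - (j : MvPolynomial (Fin (n+1)) ℚ) * tv n) := by
  rw [bbase, bbase, Finset.sum_Icc_succ_top (by omega)]
  push_cast
  ring

lemma bb_step (n j : ℕ) : ∀ k,
    bb n k (j + 1) = step (j + 1) (uv n (j + 1)) (tv n) (fun m => bb n m j) k := by
  intro k
  induction k with
  | zero => rw [step_zero]; exact bb_of_lt n (by omega)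
  | succ k ih =>
    rcases Nat.lt_trichotomy (k + 1) (j + 1) with h | h | h
    · rw [step_of_lt h, bb_of_lt n h]
    · have e : k + 1 = j + 1 := by omega
      rw [e, step_diag, bb_diag n (j + 1), bbase_succ, bb_diag n j]
      ring
    · obtain ⟨m, rfl⟩ : ∃ m, k = m + 1 := ⟨k - 1, by omega⟩
      rw [step_succ (by omega)]
      rw [show bb n (m + 1 + 1) (j + 1) = bb n (m + 2) (j + 1) from rfl]
      rw [bb, if_neg (by omega), if_neg (by omega), ih]

lemma bb_eq_build (n : ℕ) : ∀ (j k : ℕ), bb n k j = build (tv n) ((Lnat j).map (uv n)) k := by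
  intro j
  induction j with
  | zero => intro k; rw [show (Lnat 0).map (uv n) = [] from rfl]; rw [bb]; rfl
  | succ j ih =>
    intro k
    rw [bb_step n j k]
    rw [show (Lnat (j+1)).map (uv n) = uv n (j + 1) :: (Lnat j).map (uv n) from rfl]
    simp only [build, List.length_map, Lnat_length]
    have h : (fun m => bb n m j) = build (tv n) ((Lnat j).map (uv n)) := funext (ih)
    rw [h]

/-- For `k ≥ j` in `{1,…,n}`, `b_{k,j}` is symmetric in `u_1,…,u_j`: the `ℚ`-algebra
homomorphism sending `u_r ↦ u_{σ(r)}` (which fixes `u_r` for `r > j` and fixes `t`,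
since `σ` is a permutation of `{1,…,j}` fixing everything else) maps `b_{k,j}` to itself. -/
theorem stmt6 (n k j : ℕ) (hj : 1 ≤ j) (hk : j ≤ k) (hkn : k ≤ n)
    (σ : Equiv.Perm ℕ)
    (hσ1 : ∀ r ∈ Finset.Icc 1 j, σ r ∈ Finset.Icc 1 j)
    (hσ2 : ∀ r, r ∉ Finset.Icc 1 j → σ r = r) :
    MvPolynomial.aeval (fun v : Fin (n + 1) => uv n (σ (v : ℕ))) (bb n k j) = bb n k j := by
  classical
  set φ : MvPolynomial (Fin (n + 1)) ℚ →ₐ[ℚ] MvPolynomial (Fin (n + 1)) ℚ :=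
    MvPolynomial.aeval (fun v : Fin (n + 1) => uv n (σ (v : ℕ))) with hφ
  show φ (bb n k j) = bb n k j
  have hσ0 : σ 0 = 0 := hσ2 0 (by simp)
  have hφt : φ (tv n) = tv n := by
    rw [hφ, tv, MvPolynomial.aeval_X]
    rw [show ((0 : Fin (n + 1)) : ℕ) = 0 from rfl, hσ0, uv, dif_pos (Nat.zero_le n)]
    rfl
  have hφu : ∀ r, r ≤ n → φ (uv n r) = uv n (σ r) := by
    intro r h2
    rw [uv, dif_pos h2, hφ, MvPolynomial.aeval_X]
  have hmap : ((Lnat j).map (uv n)).map φ = ((Lnat j).map σ).map (uv n) := by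
    rw [List.map_map, List.map_map]
    apply List.map_congr_left
    intro x hx
    have hx' := mem_Lnat.1 hx
    exact hφu x (le_trans hx'.2 (le_trans hk hkn))
  have himg : Finset.image (fun r => σ r) (Finset.Icc 1 j) = Finset.Icc 1 j := by
    apply Finset.eq_of_subset_of_card_le
    · intro x hx
      obtain ⟨y, hy, rfl⟩ := Finset.mem_image.1 hx
      exact hσ1 y hy
    · rw [Finset.card_image_of_injective _ σ.injective]
  have hperm : ((Lnat j).map σ).Perm (Lnat j) := by
    apply List.perm_of_nodup_nodup_toFinset_eq
    · exact (Lnat_nodup j).map σ.injective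
    · exact Lnat_nodup j
    · ext x
      simp only [List.mem_toFinset, List.mem_map, mem_Lnat]
      constructor
      · rintro ⟨y, hy, rfl⟩
        exact Finset.mem_Icc.1 (hσ1 y (Finset.mem_Icc.2 hy))
      · intro hx
        have hx2 : x ∈ Finset.image (fun r => σ r) (Finset.Icc 1 j) := by
          rw [himg]; exact Finset.mem_Icc.2 hx
        obtain ⟨y, hy, rfl⟩ := Finset.mem_image.1 hx2
        exact ⟨y, Finset.mem_Icc.1 hy, rfl⟩
  calc φ (bb n k j) = φ (build (tv n) ((Lnat j).map (uv n)) k) := by rw [bb_eq_build]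
    _ = build (φ (tv n)) (((Lnat j).map (uv n)).map φ) k := map_build φ (tv n) _ k
    _ = build (tv n) (((Lnat j).map σ).map (uv n)) k := by rw [hφt, hmap]
    _ = build (tv n) ((Lnat j).map (uv n)) k := by rw [build_perm _ (hperm.map (uv n))]
    _ = bb n k j := (bb_eq_build n j k).symm
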